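/- For M ≥ N positive integers and 0 ≤ k, l ≤ N-1, the identity Σ_{p=0}^{N-1} ((M-N+p)!/p!) (-p)_k (-p)_l = ((M-N+l)! l! / (N-1-k)!) Σ_{i=0}^{l} ((i+M)!/(M-N+i)!) · (-1)^{i+k} / (i! (l-i)! (M-N+k+i+1)) holds. -/

import Mathlib

open Finset

/-- Pochhammer symbol `(x)_k = x (x+1) ⋯ (x+k-1)`. -/
noncomputable def poch (x : ℝ) (k : ℕ) : ℝ := ∏ i ∈ Finset.range k, (x + i)

namespace CrucialAux

noncomputable def cc (a l i : ℕ) : ℝ :=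
  (-1) ^ (l - i) * ((l.factorial : ℝ) * ((a + l).factorial : ℝ)) /
    ((i.factorial : ℝ) * ((l - i).factorial : ℝ) * ((a + i).factorial : ℝ))

lemma fac_ne (n : ℕ) : ((n.factorial : ℝ)) ≠ 0 := by
  exact_mod_cast n.factorial_ne_zero

lemma prod_cast_sub (p k : ℕ) : (∏ i ∈ range k, ((p:ℝ) - i)) = (p.descFactorial k : ℝ) := by
  induction k with
  | zero => simp
  | succ k ih =>
    rw [prod_range_succ, ih, Nat.descFactorial_succ]
    rcases le_or_gt k p with h | h
    · push_cast [h]; ring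
    · rw [Nat.descFactorial_of_lt h]; simp

lemma poch_neg (p k : ℕ) : poch (-(p:ℝ)) k = (-1)^k * (p.descFactorial k : ℝ) := by
  rw [← prod_cast_sub]
  unfold poch
  calc (∏ i ∈ range k, (-(p:ℝ) + i)) = ∏ i ∈ range k, (-1) * ((p:ℝ) - i) := by
        refine prod_congr rfl ?_
        intro i _; ring
    _ = (-1)^k * ∏ i ∈ range k, ((p:ℝ) - i) := by
        rw [prod_mul_distrib, prod_const, card_range]

lemma prod_cast_add (n i : ℕ) : (∏ j ∈ range i, ((n:ℝ) + j)) = (n.ascFactorial i : ℝ) := by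
  induction i with
  | zero => simp
  | succ i ih => rw [prod_range_succ, ih, Nat.ascFactorial_succ]; push_cast; ring

lemma cc_diag (a l : ℕ) : cc a l l = 1 := by
  simp only [cc, Nat.sub_self, pow_zero, Nat.factorial_zero, Nat.cast_one, one_mul, mul_one]
  exact div_self (mul_ne_zero (fac_ne l) (fac_ne (a+l)))

lemma cc_zero (a l : ℕ) : cc a (l+1) 0 = -((a:ℝ)+l+1) * cc a l 0 := by
  have h1 : a + (l+1) = (a+l) + 1 := by omega
  simp only [cc, Nat.sub_zero, h1, Nat.factorial_succ, pow_succ]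
  push_cast
  field_simp

lemma cc_rec (a i m : ℕ) :
    cc a (i+m+2) (i+1) = cc a (i+m+1) i - ((a:ℝ) + (i+m+1) + i + 2) * cc a (i+m+1) (i+1) := by
  have e1 : i+m+2 - (i+1) = m+1 := by omega
  have e2 : i+m+1 - i = m+1 := by omega
  have e3 : i+m+1 - (i+1) = m := by omega
  simp only [cc, e1, e2, e3]
  have f1 : ((i+m+2).factorial : ℝ) = ((i:ℝ)+m+2) * (i+m+1).factorial := by
    rw [show i+m+2 = (i+m+1)+1 by omega, Nat.factorial_succ]; push_cast; ring
  have f2 : ((a+(i+m+2)).factorial : ℝ) = ((a:ℝ)+i+m+2) * ((a+(i+m+1)).factorial) := by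
    rw [show a+(i+m+2) = (a+(i+m+1))+1 by omega, Nat.factorial_succ]; push_cast; ring
  have f3 : (((m+1)).factorial : ℝ) = ((m:ℝ)+1) * m.factorial := by
    rw [Nat.factorial_succ]; push_cast; ring
  have f4 : (((i+1)).factorial : ℝ) = ((i:ℝ)+1) * i.factorial := by
    rw [Nat.factorial_succ]; push_cast; ring
  have f5 : ((a+(i+1)).factorial : ℝ) = ((a:ℝ)+i+1) * ((a+i).factorial) := by
    rw [show a+(i+1) = (a+i)+1 by omega, Nat.factorial_succ]; push_cast; ring
  rw [f1, f2, f3, f4, f5, pow_succ]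
  have h1 := fac_ne i
  have h2 := fac_ne m
  have h3 := fac_ne (a+i)
  have h4 : ((i:ℝ)+1) ≠ 0 := by positivity
  have h5 : ((m:ℝ)+1) ≠ 0 := by positivity
  have h6 : ((a:ℝ)+i+1) ≠ 0 := by positivity
  field_simp
  ring


lemma expand (a l : ℕ) (x : ℝ) :
    (∏ j ∈ range l, (x - j)) =
      ∑ i ∈ range (l+1), cc a l i * ∏ j ∈ range i, (x + (a:ℝ) + 1 + j) := by
  set P : ℕ → ℝ := fun i => ∏ j ∈ range i, (x + (a:ℝ) + 1 + j) with hP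
  induction l with
  | zero => simp [cc, P, div_self (fac_ne a)]
  | succ l ih =>
    rw [prod_range_succ, ih, sum_mul]
    have hstep : ∀ i ∈ range (l+1),
        cc a l i * P i * (x - l) =
          cc a l i * P (i+1) - ((a:ℝ)+l+i+1) * (cc a l i * P i) := by
      intro i _
      have hPs : P (i+1) = P i * (x + a + 1 + i) := prod_range_succ _ _
      rw [hPs]; ring
    rw [sum_congr rfl hstep, sum_sub_distrib]
    rw [Finset.sum_range_succ (fun i => cc a l i * P (i+1)) l]
    rw [Finset.sum_range_succ' (fun i => ((a:ℝ)+l+i+1) * (cc a l i * P i)) l]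
    conv_rhs => rw [Finset.sum_range_succ' (fun i => cc a (l+1) i * P i) (l+1)]
    rw [Finset.sum_range_succ (fun i => cc a (l+1) (i+1) * P (i+1)) l]
    have hE : (∑ i ∈ range l, cc a (l+1) (i+1) * P (i+1)) =
        (∑ i ∈ range l, cc a l i * P (i+1)) -
          ∑ i ∈ range l, ((a:ℝ)+l+(↑(i+1):ℝ)+1) * (cc a l (i+1) * P (i+1)) := by
      rw [← sum_sub_distrib]
      refine sum_congr rfl ?_
      intro i hi
      obtain ⟨n, rfl⟩ : ∃ n, l = i + n + 1 := ⟨l - i - 1, by have := mem_range.1 hi; omega⟩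
      rw [show i+n+1+1 = i+n+2 by omega, cc_rec a i n]
      push_cast
      ring
    rw [hE, cc_diag, cc_diag, cc_zero]
    push_cast
    ring

lemma hockey (b m : ℕ) :
    ∑ q ∈ range (m+1), ((b+q).factorial : ℝ) / q.factorial
      = ((b+m+1).factorial : ℝ) / (m.factorial * ((b:ℝ)+1)) := by
  induction m with
  | zero =>
    have h : ((b:ℝ)+1) ≠ 0 := by positivity
    simp only [Finset.sum_range_one, Nat.add_zero, add_zero, Nat.factorial_zero, Nat.cast_one,
      div_one, one_mul, Nat.factorial_succ]
    push_cast
    field_simp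
    simp
  | succ m ih =>
    rw [sum_range_succ, ih, show b+(m+1) = b+m+1 by omega]
    have f1 : ((b+m+1+1).factorial : ℝ) = ((b:ℝ)+m+2) * (b+m+1).factorial := by
      rw [Nat.factorial_succ]; push_cast; ring
    have f2 : (((m+1)).factorial : ℝ) = ((m:ℝ)+1) * m.factorial := by
      rw [Nat.factorial_succ]; push_cast; ring
    rw [f1, f2]
    have h1 := fac_ne m
    have h2 : ((b:ℝ)+1) ≠ 0 := by positivity
    have h3 : ((m:ℝ)+1) ≠ 0 := by positivity
    have h4 := fac_ne (b+m+1)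
    field_simp
    ring


end CrucialAux

open CrucialAux in
theorem crucial_summation_formula (M N : ℕ) (hN : 1 ≤ N) (hMN : N ≤ M)
    (k l : ℕ) (hk : k ≤ N - 1) (hl : l ≤ N - 1) :
    ∑ p ∈ Finset.range N,
      (((M - N + p).factorial : ℝ) / (p.factorial : ℝ)) *
        poch (-(p : ℝ)) k * poch (-(p : ℝ)) l
      = (((M - N + l).factorial : ℝ) * (l.factorial : ℝ) / ((N - 1 - k).factorial : ℝ)) *
        ∑ i ∈ Finset.range (l + 1),
          (((i + M).factorial : ℝ) / ((M - N + i).factorial : ℝ)) *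
            (-1 : ℝ) ^ (i + k) /
              ((i.factorial : ℝ) * ((l - i).factorial : ℝ) * ((M : ℝ) - N + k + i + 1)) := by
  obtain ⟨a, rfl⟩ : ∃ a, M = N + a := ⟨M - N, by omega⟩
  obtain ⟨m, rfl⟩ : ∃ m, N = k + m + 1 := ⟨N - k - 1, by omega⟩
  simp only [show k+m+1+a - (k+m+1) = a from by omega, show k+m+1-1-k = m from by omega]
  -- Step 1: rewrite each summand using descFactorials and the expansion lemma
  have step1 : ∀ p ∈ range (k+m+1),
      (((a+p).factorial : ℝ) / (p.factorial : ℝ)) * poch (-(p:ℝ)) k * poch (-(p:ℝ)) l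
        = ∑ i ∈ range (l+1), cc a l i * ((-1:ℝ)^(k+l) *
            ((((a+p).factorial : ℝ) * (p.descFactorial k : ℝ) *
              ((p+a+1).ascFactorial i : ℝ)) / (p.factorial : ℝ))) := by
    intro p _
    rw [poch_neg, poch_neg]
    have hdl : (p.descFactorial l : ℝ)
        = ∑ i ∈ range (l+1), cc a l i * ((p+a+1).ascFactorial i : ℝ) := by
      rw [← prod_cast_sub, expand a l (p:ℝ)]
      refine sum_congr rfl ?_
      intro i _
      congr 1
      rw [← prod_cast_add]
      refine prod_congr rfl ?_
      intro j _
      push_cast; ring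
    rw [hdl]
    simp only [Finset.mul_sum]
    refine sum_congr rfl ?_
    intro i _
    ring
  rw [sum_congr rfl step1, Finset.sum_comm]
  -- Step 2: evaluate the inner sum over p
  have inner : ∀ i : ℕ,
      (∑ p ∈ range (k+m+1),
        (((a+p).factorial : ℝ) * (p.descFactorial k : ℝ) *
          ((p+a+1).ascFactorial i : ℝ)) / (p.factorial : ℝ))
      = ((a+k+i+m+1).factorial : ℝ) / (m.factorial * ((↑(a+k+i):ℝ)+1)) := by
    intro i
    rw [show k+m+1 = k+(m+1) from by omega, Finset.sum_range_add]
    have hz : (∑ p ∈ range k,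
        (((a+p).factorial : ℝ) * (p.descFactorial k : ℝ) *
          ((p+a+1).ascFactorial i : ℝ)) / (p.factorial : ℝ)) = 0 := by
      refine Finset.sum_eq_zero ?_
      intro p hp
      rw [Nat.descFactorial_of_lt (mem_range.1 hp)]
      simp
    rw [hz, zero_add]
    have hterm : ∀ q ∈ range (m+1),
        (((a+(k+q)).factorial : ℝ) * ((k+q).descFactorial k : ℝ) *
          (((k+q)+a+1).ascFactorial i : ℝ)) / ((k+q).factorial : ℝ)
        = ((a+k+i+q).factorial : ℝ) / (q.factorial : ℝ) := by
      intro q _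
      have h1 : q.factorial * (k+q).descFactorial k = (k+q).factorial := by
        have := Nat.factorial_mul_descFactorial (show k ≤ k+q by omega)
        rwa [show k+q-k = q from by omega] at this
      have h2 : (a+(k+q)).factorial * ((k+q)+a+1).ascFactorial i = (a+k+i+q).factorial := by
        have := Nat.factorial_mul_ascFactorial (a+k+q) i
        rw [show (k+q)+a+1 = (a+k+q)+1 from by omega, show a+(k+q) = a+k+q from by omega]
        rw [this, show a+k+q+i = a+k+i+q from by omega]
      rw [div_eq_div_iff (fac_ne _) (fac_ne _)]
      push_cast [← h1, ← h2]
      ring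
    rw [sum_congr rfl hterm, hockey (a+k+i) m]
  have step2 : ∀ i ∈ range (l+1),
      (∑ p ∈ range (k+m+1), cc a l i * ((-1:ℝ)^(k+l) *
          ((((a+p).factorial : ℝ) * (p.descFactorial k : ℝ) *
            ((p+a+1).ascFactorial i : ℝ)) / (p.factorial : ℝ))))
      = cc a l i * ((-1:ℝ)^(k+l) *
          (((a+k+i+m+1).factorial : ℝ) / (m.factorial * ((↑(a+k+i):ℝ)+1)))) := by
    intro i _
    rw [← Finset.mul_sum, ← Finset.mul_sum, inner i]
  rw [sum_congr rfl step2, Finset.mul_sum]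
  -- Step 3: match the terms
  refine sum_congr rfl ?_
  intro i hi
  obtain ⟨j, rfl⟩ : ∃ j, l = i + j := ⟨l - i, by have := mem_range.1 hi; omega⟩
  have hcast : ((↑(k+m+1+a):ℝ)) - (↑(k+m+1):ℝ) + (k:ℝ) + (i:ℝ) + 1 = (↑(a+k+i):ℝ) + 1 := by
    push_cast; ring
  rw [hcast]
  have hsign : ((-1:ℝ))^(k+(i+j)) * (-1)^j = (-1)^(i+k) := by
    rw [← pow_add, show k+(i+j)+j = (i+k)+2*j from by ring, pow_add, pow_mul]
    norm_num
  simp only [cc, show i+j-i = j from by omega]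
  have hf1 : ((i+(k+m+1+a)).factorial : ℝ) = ((a+k+i+m+1).factorial : ℝ) := by
    rw [show i+(k+m+1+a) = a+k+i+m+1 from by omega]
  rw [hf1]
  have h1 := fac_ne i
  have h2 := fac_ne j
  have h3 := fac_ne m
  have h4 := fac_ne (a+i)
  have h5 : ((↑(a+k+i):ℝ)+1) ≠ 0 := by positivity
  field_simp
  rw [← hsign]
  ring
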